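/- The Gauss sum identity Σ_{a=0}^{2p-1} e^{-iπ a²/(2p)} = (1 - i)√p holds for every positive integer p. -/

import Mathlib

open Complex Finset Filter Topology HurwitzZeta

set_option maxHeartbeats 1000000


lemma ofReal_mul_cpow (r : ℝ) (hr : 0 < r) (w : ℂ) (hw : w ≠ 0) (c : ℂ) :
    ((r : ℂ) * w) ^ c = (r : ℂ) ^ c * w ^ c := by
  have hr' : (r:ℂ) ≠ 0 := ofReal_ne_zero.mpr hr.ne'
  rw [Complex.cpow_def_of_ne_zero (mul_ne_zero hr' hw), Complex.cpow_def_of_ne_zero hr',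
    Complex.cpow_def_of_ne_zero hw, ← Complex.exp_add, ← add_mul, Complex.log_ofReal_mul hr hw,
    Complex.ofReal_log hr.le]

lemma theta_add_nat (z τ : ℂ) (k : ℕ) : jacobiTheta₂ z (τ + 2 * k) = jacobiTheta₂ z τ := by
  induction k with
  | zero => simp
  | succ n ih =>
      rw [show τ + 2 * ((n:ℕ)+1 : ℕ) = (τ + 2 * n) + 2 by push_cast; ring,
        jacobiTheta₂_add_right, ih]
  -- note: (↑(n+1) : ℂ) handling


lemma stepA (p : ℕ) (hp : 0 < p) {t : ℝ} (ht : 0 < t) :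
    jacobiTheta₂ 0 (-1/(2*p) + I*t) =
      ∑ a ∈ Finset.range (2*p), Complex.exp (-(Real.pi * I * (a:ℂ)^2) / (2*p)) *
        ((evenKernel ↑((a:ℝ)/(2*p)) (t*(2*p)^2) : ℝ) : ℂ) := by
  haveI : NeZero (2*p) := ⟨by omega⟩
  have hNc : ((2*p : ℕ) : ℂ) ≠ 0 := Nat.cast_ne_zero.mpr (by omega)
  have hτim : 0 < (-1/(2*p) + I*t : ℂ).im := by
    simp only [Complex.add_im, Complex.mul_im, Complex.I_re, Complex.I_im, Complex.ofReal_re,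
      Complex.ofReal_im, Complex.div_im, Complex.neg_im, Complex.one_im]
    simp [ht]
  have hs : 0 < t*(2*p:ℝ)^2 := by positivity
  set τ : ℂ := -1/(2*p) + I*t with hτ
  set e : ℤ ≃ Fin (2*p) × ℤ := (Int.divModEquiv (2*p)).trans (Equiv.prodComm _ _) with he
  have base : HasSum (fun x : Fin (2*p) × ℤ ↦ jacobiTheta₂_term (e.symm x) 0 τ)
      (jacobiTheta₂ 0 τ) :=
    (Equiv.hasSum_iff e.symm).mpr (hasSum_jacobiTheta₂_term 0 hτim)
  have fib : ∀ b : Fin (2*p), HasSum (fun q : ℤ ↦ jacobiTheta₂_term (e.symm (b, q)) 0 τ)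
      (Complex.exp (-(Real.pi * I * ((b:ℕ):ℂ)^2) / (2*p)) *
        ((evenKernel ↑(((b:ℕ):ℝ)/(2*p)) (t*(2*p)^2) : ℝ) : ℂ)) := by
    intro b
    have h0 := ((hasSum_ofReal (α := ℤ)).mpr (hasSum_int_evenKernel (((b:ℕ):ℝ)/(2*p)) hs)).mul_left
      (Complex.exp (-(Real.pi * I * ((b:ℕ):ℂ)^2) / (2*p)))
    have hfun : (fun q : ℤ ↦ jacobiTheta₂_term (e.symm (b, q)) 0 τ) = fun q : ℤ ↦
        Complex.exp (-(Real.pi * I * ((b:ℕ):ℂ)^2) / (2*p)) *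
          ((Real.exp (-Real.pi * ((q:ℝ) + ((b:ℕ):ℝ)/(2*p))^2 * (t*(2*p)^2)) : ℝ) : ℂ) := by
      funext q
      have hsymm : (e.symm (b, q) : ℤ) = q * (2*p) + (b:ℕ) := by
        simp [he, Int.divModEquiv]
      rw [jacobiTheta₂_term, hsymm]
      have hp2 : (2*(p:ℂ)) ≠ 0 := by
        simp [Nat.cast_ne_zero]; omega
      rw [Complex.ofReal_exp, ← Complex.exp_add,
        show (2*(Real.pi:ℂ)*I*((q*(2*p)+(b:ℕ) : ℤ):ℂ)*0 + (Real.pi:ℂ)*I*((q*(2*p)+(b:ℕ) : ℤ):ℂ)^2*τ)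
          = (-((Real.pi:ℂ) * I * ((b:ℕ):ℂ)^2)/(2*p)
              + ((-Real.pi * ((q:ℝ) + ((b:ℕ):ℝ)/(2*p))^2*(t*(2*p)^2) : ℝ):ℂ))
            + ((-(q*(q*(p:ℤ)+((b:ℕ):ℤ))) : ℤ) : ℂ) * (2*(Real.pi:ℂ)*I) from by
          have hp0 : (p:ℂ) ≠ 0 := by exact_mod_cast hp.ne'
          rw [hτ]; push_cast; field_simp; ring_nf; simp only [Complex.I_sq]; ring,
        Complex.exp_add, Complex.exp_int_mul_two_pi_mul_I, mul_one]
    rw [hfun]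
    exact h0
  have key := base.prod_fiberwise fib
  rw [← key.tsum_eq, tsum_fintype, Fin.sum_univ_eq_sum_range
    (fun a : ℕ ↦ Complex.exp (-(Real.pi * I * (a:ℂ)^2) / (2*p)) *
        ((evenKernel ↑((a:ℝ)/(2*p)) (t*(2*p)^2) : ℝ) : ℂ)) (2*p)]


lemma alg (a b x y J : ℂ) (ha : a ≠ 0) (hx : x ≠ 0) (hy : y ≠ 0) :
    a * b * (1/x * (1/(a*y)) * J) = b * (1/x) * (1/y) * J := by
  field_simp

lemma stepKey (p : ℕ) (hp : 0 < p) {t : ℝ} (ht : 0 < t) :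
    ∑ a ∈ Finset.range (2*p), Complex.exp (-(Real.pi * I * (a:ℂ)^2) / (2*p)) *
        ((cosKernel ↑((a:ℝ)/(2*p)) (1/(t*(2*p)^2)) : ℝ) : ℂ)
      = (Real.sqrt (2*p) : ℂ) * (1/(-I*(-1/(2*p) + I*t))^(1/2:ℂ))
          * (1/((-1/(-1/(2*p) + I*t))^(1/2:ℂ)))
          * jacobiTheta (1/(2*p) + I*(1/((2*p)^2*t))) := by
  have hp2 : ((2:ℝ)*p) ≠ 0 := by positivity
  have hpc : ((2:ℂ)*p) ≠ 0 := by
    simpa using mul_ne_zero two_ne_zero (Nat.cast_ne_zero.mpr hp.ne' : (p:ℂ) ≠ 0)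
  have hp0 : (p:ℂ) ≠ 0 := by exact_mod_cast hp.ne'
  set τ : ℂ := -1/(2*p) + I*t with hτ
  have hτim : 0 < τ.im := by
    rw [hτ]
    simp only [Complex.add_im, Complex.mul_im, Complex.I_re, Complex.I_im, Complex.ofReal_re,
      Complex.ofReal_im, Complex.div_im, Complex.neg_im, Complex.one_im]
    simp [ht]
  have hτ0 : τ ≠ 0 := by
    intro h; rw [h] at hτim; simp at hτim
  have hs : 0 < t*(2*p:ℝ)^2 := by positivity
  -- step A and even→cos
  have A := stepA p hp ht
  have A2 : jacobiTheta₂ 0 τ = ((1/(t*(2*p:ℝ)^2)^((1:ℝ)/2) : ℝ) : ℂ) *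
      ∑ a ∈ Finset.range (2*p), Complex.exp (-(Real.pi * I * (a:ℂ)^2) / (2*p)) *
        ((cosKernel ↑((a:ℝ)/(2*p)) (1/(t*(2*p)^2)) : ℝ) : ℂ) := by
    rw [A, Finset.mul_sum]
    refine Finset.sum_congr rfl fun a _ ↦ ?_
    rw [evenKernel_functional_equation]
    push_cast
    ring
  -- functional equation side
  set σ : ℂ := -I*(2*p)*t/τ with hσ
  have hσ0 : σ ≠ 0 := by
    rw [hσ]
    apply div_ne_zero _ hτ0
    simp [Complex.I_ne_zero, hp.ne', ht.ne', Nat.cast_ne_zero]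
  have hm : (-1 + I*(t:ℂ)*(2*(p:ℂ))) ≠ 0 := by
    have h : (-1 + I*(t:ℂ)*(2*(p:ℂ))) = (2*(p:ℂ)) * τ := by rw [hτ]; field_simp
    rw [h]; exact mul_ne_zero hpc hτ0
  have fe1 : jacobiTheta₂ 0 τ = 1/(-I*τ)^(1/2:ℂ) * jacobiTheta₂ 0 (-1/τ) := by
    simpa using jacobiTheta₂_functional_equation 0 τ
  have per : jacobiTheta₂ 0 (-1/τ) = jacobiTheta₂ 0 σ := by
    rw [show -1/τ = σ + 2*(p:ℂ) from by
      rw [hσ, hτ]; field_simp [hm]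
      linear_combination mul_inv_cancel₀ (show (-1 + (p:ℂ)*I*t*2) ≠ 0 by convert hm using 1; ring)]
    exact theta_add_nat 0 σ p
  have hρ : -1/σ = 1/(2*(p:ℂ)) + I*(1/((2*(p:ℂ))^2*(t:ℂ))) := by
    rw [hσ, hτ]
    have htc : (t:ℂ) ≠ 0 := Complex.ofReal_ne_zero.mpr ht.ne'
    field_simp
    ring_nf
    simp only [Complex.I_sq]
    ring
  have fe2 : jacobiTheta₂ 0 σ = 1/(-I*σ)^(1/2:ℂ) *
      jacobiTheta₂ 0 (1/(2*(p:ℂ)) + I*(1/((2*(p:ℂ))^2*(t:ℂ)))) := by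
    rw [← hρ]
    simpa using jacobiTheta₂_functional_equation 0 σ
  -- scalar handling
  have hw0 : (-1/τ : ℂ) ≠ 0 := div_ne_zero (neg_ne_zero.mpr one_ne_zero) hτ0
  have hIσ : -I*σ = ((2*p*t : ℝ) : ℂ) * (-1/τ) := by
    rw [hσ]; push_cast; field_simp; ring_nf; simp only [Complex.I_sq]; ring
  have hsplit : (-I*σ)^(1/2:ℂ) = ((Real.sqrt (2*p*t) : ℝ) : ℂ) * (-1/τ)^(1/2:ℂ) := by
    rw [hIσ, ofReal_mul_cpow (2*p*t) (by positivity) _ hw0,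
      show ((1:ℂ)/2) = (((1:ℝ)/2 : ℝ) : ℂ) by norm_num,
      ← Complex.ofReal_cpow (by positivity), ← Real.sqrt_eq_rpow]
  -- assemble
  have hsq : Real.sqrt (t*(2*p)^2) = Real.sqrt (2*p*t) * Real.sqrt (2*p) := by
    rw [← Real.sqrt_mul (by positivity)]
    ring_nf
  have hout : (((t*(2*p:ℝ)^2)^((1:ℝ)/2) : ℝ) : ℂ) = ((Real.sqrt (2*p*t) : ℝ) : ℂ) *
      ((Real.sqrt (2*p) : ℝ) : ℂ) := by
    rw [← Real.sqrt_eq_rpow, hsq]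
    push_cast; ring
  have hsqrt0 : ((Real.sqrt (2*p*t) : ℝ) : ℂ) ≠ 0 := by
    simpa using (Real.sqrt_ne_zero'.mpr (by positivity) : Real.sqrt (2*p*t) ≠ 0)
  have hcpow1 : (-I*τ)^(1/2:ℂ) ≠ 0 := by
    rw [Complex.cpow_def_of_ne_zero (mul_ne_zero (neg_ne_zero.mpr Complex.I_ne_zero) hτ0)]
    exact Complex.exp_ne_zero _
  have hcpow2 : (-1/τ : ℂ)^(1/2:ℂ) ≠ 0 := by
    rw [Complex.cpow_def_of_ne_zero hw0]
    exact Complex.exp_ne_zero _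
  have main : jacobiTheta₂ 0 τ = 1/(-I*τ)^(1/2:ℂ) *
      (1/(((Real.sqrt (2*p*t) : ℝ) : ℂ) * (-1/τ)^(1/2:ℂ))) *
      jacobiTheta (1/(2*(p:ℂ)) + I*(1/((2*(p:ℂ))^2*(t:ℂ)))) := by
    rw [jacobiTheta_eq_jacobiTheta₂, fe1, per, fe2, hsplit]
    ring
  -- combine A2 and main
  have goal' : ∑ a ∈ Finset.range (2*p), Complex.exp (-(Real.pi * I * (a:ℂ)^2) / (2*p)) *
        ((cosKernel ↑((a:ℝ)/(2*p)) (1/(t*(2*p)^2)) : ℝ) : ℂ)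
      = (((t*(2*p:ℝ)^2)^((1:ℝ)/2) : ℝ) : ℂ) * jacobiTheta₂ 0 τ := by
    rw [A2, ← mul_assoc, ← Complex.ofReal_mul]
    have : (t*(2*p:ℝ)^2)^((1:ℝ)/2) * (1/(t*(2*p:ℝ)^2)^((1:ℝ)/2)) = 1 := by
      field_simp
    rw [mul_comm ((t*(2*p:ℝ)^2)^((1:ℝ)/2))] at this ⊢
    rw [this]
    simp
  rw [goal', main, hout]
  exact alg _ _ _ _ _ hsqrt0 hcpow1 hcpow2


-- the constant
lemma constC (p : ℕ) (hp : 0 < p) :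
    ((Real.sqrt (2*p) : ℝ) : ℂ) * (1/((I/(2*(p:ℂ)))^(1/2:ℂ))) * (1/(((2:ℂ)*p)^(1/2:ℂ)))
      = (1 - I) * (Real.sqrt p : ℝ) := by
  have h2p : (0:ℝ) < 2*p := by positivity
  have e1 : ((2:ℂ)*(p:ℂ))^(1/2:ℂ) = ((Real.sqrt (2*p) : ℝ) : ℂ) := by
    rw [show ((2:ℂ)*(p:ℂ)) = (((2*p:ℝ)):ℂ) by push_cast; ring,
      show ((1:ℂ)/2) = (((1:ℝ)/2 : ℝ) : ℂ) by norm_num,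
      ← Complex.ofReal_cpow h2p.le, ← Real.sqrt_eq_rpow]
  have e2 : (I/(2*(p:ℂ)))^(1/2:ℂ)
      = ((Real.sqrt ((2*p:ℝ)⁻¹) : ℝ) : ℂ) * I ^ (1/2 : ℂ) := by
    rw [show (I/(2*(p:ℂ))) = (((2*p:ℝ)⁻¹ : ℝ) : ℂ) * I by push_cast; field_simp,
      ofReal_mul_cpow _ (by positivity) _ I_ne_zero,
      show ((1:ℂ)/2) = (((1:ℝ)/2 : ℝ) : ℂ) by norm_num,
      ← Complex.ofReal_cpow (by positivity), ← Real.sqrt_eq_rpow]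
  have e3 : I ^ (1/2 : ℂ) = ((Real.sqrt 2 / 2 : ℝ) : ℂ) * (1 + I) := by
    rw [Complex.cpow_def_of_ne_zero I_ne_zero, Complex.log_I,
      show ((Real.pi:ℂ)/2*I) * (1/2) = ((Real.pi/4 : ℝ) : ℂ) * I by push_cast; ring,
      Complex.exp_mul_I, ← Complex.ofReal_cos, ← Complex.ofReal_sin,
      Real.cos_pi_div_four, Real.sin_pi_div_four]
    push_cast
    ring
  rw [e1, e2, e3, Real.sqrt_inv, Real.sqrt_mul (by norm_num : (0:ℝ) ≤ 2) (p:ℝ)]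
  have hs2 : ((Real.sqrt 2 : ℝ):ℂ) ≠ 0 := by
    simpa using (Real.sqrt_ne_zero'.mpr two_pos).symm ▸ (by positivity : (0:ℝ) < √2).ne'
  have hsp : ((Real.sqrt p : ℝ):ℂ) ≠ 0 := by
    have : (0:ℝ) < Real.sqrt p := Real.sqrt_pos.mpr (by positivity)
    exact_mod_cast Complex.ofReal_ne_zero.mpr this.ne'
  have h1I : (1 + I) ≠ 0 := by
    intro h
    have := congrArg Complex.im h
    simp at this
  have hI2 : ((1:ℂ) - I) * (1 + I) = 2 := by
    have := Complex.I_sq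
    ring_nf
    rw [Complex.I_sq]
    ring
  have h22 : ((Real.sqrt 2 : ℝ):ℂ) * ((Real.sqrt 2 : ℝ):ℂ) = 2 := by
    rw [← Complex.ofReal_mul, Real.mul_self_sqrt (by norm_num : (0:ℝ) ≤ 2)]
    norm_num
  push_cast
  field_simp
  ring_nf
  simp only [Complex.I_sq, pow_succ, pow_zero, one_mul]
  ring_nf


lemma limR (p : ℕ) (hp : 0 < p) :
    Filter.Tendsto (fun t : ℝ ↦ ((Real.sqrt (2*p) : ℝ) : ℂ) * (1/(-I*(-1/(2*p) + I*t))^(1/2:ℂ))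
          * (1/((-1/(-1/(2*p) + I*t))^(1/2:ℂ)))
          * jacobiTheta (1/(2*p) + I*(1/((2*p)^2*t))))
      (𝓝[>] 0) (𝓝 ((1 - I) * (Real.sqrt p : ℝ))) := by
  have hpc : ((2:ℂ)*p) ≠ 0 := by
    simpa using mul_ne_zero two_ne_zero (Nat.cast_ne_zero.mpr hp.ne' : (p:ℂ) ≠ 0)
  have hp0 : (p:ℂ) ≠ 0 := by exact_mod_cast hp.ne'
  have h2p : (0:ℝ) < 2*p := by positivity
  -- first factor
  have inner1 : Filter.Tendsto (fun t : ℝ ↦ -I*((-1/(2*(p:ℂ))) + I*(t:ℂ)))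
      (𝓝[>] (0:ℝ)) (𝓝 (I/(2*(p:ℂ)))) := by
    refine Filter.Tendsto.mono_left ?_ nhdsWithin_le_nhds
    have hc : Continuous (fun t : ℝ ↦ -I*((-1/(2*(p:ℂ))) + I*(t:ℂ))) := by fun_prop
    refine hc.tendsto' 0 _ ?_
    push_cast
    field_simp
    all_goals simp
  have hslit1 : (I/(2*(p:ℂ))) ∈ Complex.slitPlane := by
    rw [Complex.mem_slitPlane_iff]
    right
    rw [show (I/(2*(p:ℂ))) = I * ((((2*(p:ℝ)))⁻¹ : ℝ):ℂ) by push_cast; ring,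
      Complex.I_mul_im, Complex.ofReal_re]
    exact inv_ne_zero h2p.ne'
  have t1 : Filter.Tendsto (fun t : ℝ ↦ ((-I*((-1/(2*(p:ℂ))) + I*(t:ℂ)))^(1/2:ℂ)))
      (𝓝[>] (0:ℝ)) (𝓝 ((I/(2*(p:ℂ)))^(1/2:ℂ))) :=
    inner1.cpow tendsto_const_nhds hslit1
  -- second factor
  have inner2 : Filter.Tendsto (fun t : ℝ ↦ (-1/((-1/(2*(p:ℂ))) + I*(t:ℂ))))
      (𝓝[>] (0:ℝ)) (𝓝 ((2:ℂ)*p)) := by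
    have hbase : Filter.Tendsto (fun t : ℝ ↦ ((-1/(2*(p:ℂ))) + I*(t:ℂ)))
        (𝓝[>] (0:ℝ)) (𝓝 (-1/(2*(p:ℂ)))) := by
      refine Filter.Tendsto.mono_left ?_ nhdsWithin_le_nhds
      have hτc : Continuous (fun t : ℝ ↦ ((-1/(2*(p:ℂ))) + I*(t:ℂ))) := by fun_prop
      refine hτc.tendsto' 0 _ ?_
      simp
    have h0 : (-1/(2*(p:ℂ))) ≠ 0 := by
      simp [hpc]
    have h := (tendsto_const_nhds (x := (-1:ℂ))).div hbase h0
    convert h using 2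
    exacts [rfl, by field_simp]
  have hslit2 : ((2:ℂ)*p) ∈ Complex.slitPlane := by
    rw [Complex.mem_slitPlane_iff]
    left
    simp [hp]
  have t2 : Filter.Tendsto (fun t : ℝ ↦ ((-1/((-1/(2*(p:ℂ))) + I*(t:ℂ)))^(1/2:ℂ)))
      (𝓝[>] (0:ℝ)) (𝓝 (((2:ℂ)*p)^(1/2:ℂ))) :=
    inner2.cpow tendsto_const_nhds hslit2
  -- theta factor
  have heq : ∀ t : ℝ, 0 < t → (1/(2*(p:ℂ)) + I*(1/((2*(p:ℂ))^2*(t:ℂ)))).im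
      = ((2*p:ℝ)^2*t)⁻¹ := by
    intro t ht
    have h : (1/(2*(p:ℂ)) + I*(1/((2*(p:ℂ))^2*(t:ℂ)))) =
        ((1/(2*p:ℝ) : ℝ) : ℂ) + ((((2*p:ℝ)^2*t)⁻¹ : ℝ) : ℂ) * I := by
      push_cast
      ring
    rw [h, Complex.add_im, Complex.ofReal_im, Complex.mul_I_im, Complex.ofReal_re, zero_add]
  have him : Filter.Tendsto (fun t : ℝ ↦ (1/(2*(p:ℂ)) + I*(1/((2*(p:ℂ))^2*(t:ℂ)))).im)
      (𝓝[>] (0:ℝ)) atTop := by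
    have hx : Filter.Tendsto (fun t : ℝ ↦ (2*p:ℝ)^2*t) (𝓝[>] (0:ℝ)) (𝓝[>] (0:ℝ)) := by
      rw [tendsto_nhdsWithin_iff]
      constructor
      · refine Filter.Tendsto.mono_left ?_ nhdsWithin_le_nhds
        exact (continuous_const.mul continuous_id).tendsto' 0 0 (by simp)
      · filter_upwards [self_mem_nhdsWithin] with x hx
        exact Set.mem_Ioi.mpr (mul_pos (by positivity) hx)
    have hmono : Filter.Tendsto (fun t : ℝ ↦ ((2*p:ℝ)^2*t)⁻¹) (𝓝[>] (0:ℝ)) atTop :=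
      tendsto_inv_nhdsGT_zero.comp hx
    refine Filter.Tendsto.congr' ?_ hmono
    filter_upwards [self_mem_nhdsWithin] with t ht
    exact (heq t ht).symm
  have t3 : Filter.Tendsto (fun t : ℝ ↦ jacobiTheta (1/(2*(p:ℂ)) + I*(1/((2*(p:ℂ))^2*(t:ℂ)))))
      (𝓝[>] (0:ℝ)) (𝓝 1) := by
    have hcomp : Filter.Tendsto (fun t : ℝ ↦ (1/(2*(p:ℂ)) + I*(1/((2*(p:ℂ))^2*(t:ℂ)))))
        (𝓝[>] (0:ℝ)) (Filter.comap Complex.im atTop) := by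
      rw [Filter.tendsto_comap_iff]
      exact him
    have hbig := isBigO_at_im_infty_jacobiTheta_sub_one.comp_tendsto hcomp
    have hexp : Filter.Tendsto (fun t : ℝ ↦ Real.exp
        (-Real.pi * (1/(2*(p:ℂ)) + I*(1/((2*(p:ℂ))^2*(t:ℂ)))).im)) (𝓝[>] (0:ℝ)) (𝓝 0) := by
      have base : Filter.Tendsto (fun x : ℝ ↦ Real.exp (-Real.pi * x)) atTop (𝓝 0) := by
        simpa only [neg_mul, Real.tendsto_exp_comp_nhds_zero, tendsto_neg_atBot_iff, id_eq]
          using tendsto_id.const_mul_atTop Real.pi_pos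
      exact base.comp him
    have h0 := hbig.trans_tendsto hexp
    have h1 := h0.add (tendsto_const_nhds (x := (1:ℂ)))
    simpa using h1
  -- nonvanishing of limits
  have hne1 : ((I/(2*(p:ℂ)))^(1/2:ℂ)) ≠ 0 := by
    rw [Complex.cpow_def_of_ne_zero (div_ne_zero I_ne_zero hpc)]
    exact Complex.exp_ne_zero _
  have hne2 : (((2:ℂ)*p)^(1/2:ℂ)) ≠ 0 := by
    rw [Complex.cpow_def_of_ne_zero hpc]
    exact Complex.exp_ne_zero _
  have comb := (((tendsto_const_nhds
        (x := ((Real.sqrt (2*p) : ℝ) : ℂ)) (f := 𝓝[>] (0:ℝ))).mul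
      (t1.inv₀ hne1)).mul (t2.inv₀ hne2)).mul t3
  have hval : ((Real.sqrt (2*p):ℝ):ℂ) * (((I/(2*(p:ℂ)))^(1/2:ℂ))⁻¹) * ((((2:ℂ)*p)^(1/2:ℂ))⁻¹) * 1
      = (1-I)*((Real.sqrt p:ℝ):ℂ) := by
    rw [mul_one]
    have h := constC p hp
    simpa [one_div] using h
  rw [← hval]
  refine comb.congr fun t ↦ ?_
  simp only [one_div]

lemma limL (p : ℕ) (hp : 0 < p) :
    Filter.Tendsto (fun t : ℝ ↦ ∑ a ∈ Finset.range (2*p),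
        Complex.exp (-(Real.pi * I * (a:ℂ)^2) / (2*p)) *
        ((cosKernel ↑((a:ℝ)/(2*p)) (1/(t*(2*p)^2)) : ℝ) : ℂ))
      (𝓝[>] 0) (𝓝 (∑ a ∈ Finset.range (2*p),
        Complex.exp (-(Real.pi * I * (a:ℂ)^2) / (2*p)))) := by
  have h2p : (0:ℝ) < 2*p := by positivity
  have harg : Filter.Tendsto (fun t : ℝ ↦ 1/(t*(2*p:ℝ)^2)) (𝓝[>] (0:ℝ)) atTop := by
    have hx : Filter.Tendsto (fun t : ℝ ↦ t*(2*p:ℝ)^2) (𝓝[>] (0:ℝ)) (𝓝[>] (0:ℝ)) := by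
      rw [tendsto_nhdsWithin_iff]
      constructor
      · refine Filter.Tendsto.mono_left ?_ nhdsWithin_le_nhds
        exact (continuous_id.mul continuous_const).tendsto' 0 0 (by simp)
      · filter_upwards [self_mem_nhdsWithin] with x hx
        exact Set.mem_Ioi.mpr (mul_pos hx (by positivity))
    simpa only [one_div, Function.comp_def] using tendsto_inv_nhdsGT_zero.comp hx
  refine tendsto_finset_sum _ fun a _ ↦ ?_
  have hker : Filter.Tendsto (fun x : ℝ ↦ cosKernel ↑((a:ℝ)/(2*p)) x) atTop (𝓝 1) := by
    obtain ⟨r, hr, hbig⟩ := isBigO_atTop_cosKernel_sub ↑((a:ℝ)/(2*p))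
    have hexp : Filter.Tendsto (fun x : ℝ ↦ Real.exp (-r * x)) atTop (𝓝 0) := by
      simpa only [neg_mul, Real.tendsto_exp_comp_nhds_zero, tendsto_neg_atBot_iff, id_eq]
        using tendsto_id.const_mul_atTop hr
    have h0 := hbig.trans_tendsto hexp
    have h1 := h0.add (tendsto_const_nhds (x := (1:ℝ)))
    simpa using h1
  have hcomp := hker.comp harg
  have hC : Filter.Tendsto (fun t : ℝ ↦ ((cosKernel ↑((a:ℝ)/(2*p)) (1/(t*(2*p)^2)) : ℝ) : ℂ))
      (𝓝[>] (0:ℝ)) (𝓝 1) := by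
    have := (Complex.continuous_ofReal.tendsto 1).comp hcomp
    simpa [Function.comp_def] using this
  simpa using hC.const_mul (Complex.exp (-(Real.pi * I * (a:ℂ)^2) / (2*p)))


/-- The Gauss sum identity `Σ_{a=0}^{2p-1} e^{-iπ a²/(2p)} = (1 - i)√p`. -/
theorem gauss_sum (p : ℕ) (hp : 0 < p) :
    ∑ a ∈ Finset.range (2 * p),
        Complex.exp (-(Real.pi * Complex.I * (a : ℂ) ^ 2) / (2 * p))
      = (1 - Complex.I) * Real.sqrt p := by
  have e1 := limL p hp
  have e2 : Filter.Tendsto (fun t : ℝ ↦ ∑ a ∈ Finset.range (2*p),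
      Complex.exp (-(Real.pi * I * (a:ℂ)^2) / (2*p)) *
      ((cosKernel ↑((a:ℝ)/(2*p)) (1/(t*(2*p)^2)) : ℝ) : ℂ))
      (𝓝[>] 0) (𝓝 ((1 - I) * (Real.sqrt p : ℝ))) := by
    refine Filter.Tendsto.congr' ?_ (limR p hp)
    filter_upwards [self_mem_nhdsWithin] with t ht
    exact (stepKey p hp ht).symm
  exact tendsto_nhds_unique e1 e2
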